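/- Let γ > 0 and let X be a nonnegative random variable that is not almost surely constant, such that either γ ≥ 1 or P(X = 0) ≥ 1 − γ. For λ > 0 define β₁(λ) = E[λ/(X+λ)] and β₂(λ) = E[(λ/(X+λ))²]. Then the function λ ↦ (β₁(λ) − (1 − γ)) / (λ · √(β₂(λ) − β₁(λ)²)) is nonincreasing on (0, ∞). -/

import Mathlib

open MeasureTheory

private lemma nonneg_of_mul_left {a b : ℝ} (ha : 0 < a) (h : 0 ≤ a * b) : 0 ≤ b := by
  by_contra h'
  push_neg at h'
  nlinarith

private lemma key_alg {γ m q c ρ : ℝ} (hρ0 : 0 < ρ) (hρ1 : ρ ≤ 1) (hγ : ρ ≤ γ)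
    (hm0 : 0 ≤ m) (hmρ : m ≤ ρ) (hF1 : m^2 ≤ ρ*q) (hcv : m*q ≤ c)
    (hI1 : 0 ≤ (ρ-m)*(ρ^2*c - 2*ρ*m*q + m^3) + (ρ*q-m^2)^2) :
    (m-q)*(q-m^2) ≤ (γ-m)*(c-m*q) := by
  have hI1' : 0 ≤ (ρ-m)*(ρ*c-m*q) - (m-q)*(ρ*q-m^2) := by
    apply nonneg_of_mul_left hρ0
    nlinarith [hI1]
  have hstep2 : 0 ≤ (ρ-m)*c - (m-q)*q := by
    apply nonneg_of_mul_left hρ0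
    nlinarith [mul_nonneg hm0 (by linarith : (0:ℝ) ≤ ρ*q - m^2)]
  have hT' : (m-q)*(q-m^2) ≤ (ρ-m)*(c-m*q) := by
    nlinarith [mul_nonneg (by linarith : (0:ℝ) ≤ 1-ρ) hstep2]
  nlinarith [mul_nonneg (by linarith : (0:ℝ) ≤ γ-ρ) (by linarith : (0:ℝ) ≤ c-m*q)]


set_option maxHeartbeats 1000000 in
private lemma moment_facts {Ω : Type*} [MeasurableSpace Ω] (P : Measure Ω) [IsProbabilityMeasure P]
    (γ : ℝ) (X : Ω → ℝ) (hX : Measurable X) (hnn : ∀ᵐ ω ∂P, 0 ≤ X ω)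
    (hnc : ¬ ∃ c : ℝ, ∀ᵐ ω ∂P, X ω = c)
    (hcase : 1 ≤ γ ∨ ENNReal.ofReal (1 - γ) ≤ P {ω | X ω = 0})
    (l p r s : ℝ) (hl : 0 < l)
    (hp : p = ∫ ω, l / (X ω + l) ∂P) (hr : r = ∫ ω, (l / (X ω + l))^2 ∂P)
    (hs : s = ∫ ω, (l / (X ω + l))^3 ∂P) :
    1 - γ ≤ p ∧ 0 < r - p^2 ∧
      (p - r) * (r - p^2) ≤ (p - (1-γ)) * (2*r + p*r - s - 2*p^2) := by
  set T : Ω → ℝ := fun ω => l / (X ω + l) with hTdef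
  set Z : Ω → ℝ := fun ω => if X ω = 0 then 0 else 1 with hZdef
  have hTmeas : Measurable T := measurable_const.div (hX.add_const l)
  have hZmeas : Measurable Z := Measurable.ite (hX (measurableSet_singleton 0))
    measurable_const measurable_const
  set ρ : ℝ := ∫ ω, Z ω ∂P with hρdef
  -- pointwise facts
  have hT1 : ∀ ω, X ω = 0 → T ω = 1 := by
    intro ω h
    simp [hTdef, h, div_self hl.ne']
  have hZ0 : ∀ ω, 0 ≤ Z ω := by
    intro ω; by_cases h : X ω = 0 <;> simp [hZdef, h]
  have hZ1 : ∀ ω, Z ω ≤ 1 := by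
    intro ω; by_cases h : X ω = 0 <;> simp [hZdef, h]
  have hTae : ∀ᵐ ω ∂P, 0 < T ω ∧ T ω ≤ 1 := by
    filter_upwards [hnn] with ω hω
    constructor
    · exact div_pos hl (by linarith)
    · rw [div_le_one (by linarith)]; linarith
  -- integrability
  have hbd : ∀ (f : Ω → ℝ), Measurable f → (∀ᵐ ω ∂P, ‖f ω‖ ≤ 1) → Integrable f P := by
    intro f hf hb
    exact (integrable_const 1).mono' hf.aestronglyMeasurable hb
  have hTnorm : ∀ n : ℕ, ∀ᵐ ω ∂P, ‖T ω ^ n‖ ≤ 1 := by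
    intro n
    filter_upwards [hTae] with ω hω
    rw [Real.norm_eq_abs, abs_pow, abs_of_pos hω.1]
    exact pow_le_one₀ hω.1.le hω.2
  have iT : Integrable T P := by
    have := hbd (fun ω => T ω ^ 1) (hTmeas.pow_const 1) (hTnorm 1)
    simpa using this
  have iT2 : Integrable (fun ω => T ω ^ 2) P := hbd _ (hTmeas.pow_const 2) (hTnorm 2)
  have iT3 : Integrable (fun ω => T ω ^ 3) P := hbd _ (hTmeas.pow_const 3) (hTnorm 3)
  have iZ : Integrable Z P := hbd _ hZmeas (Filter.Eventually.of_forall fun ω => by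
    rw [Real.norm_eq_abs, abs_of_nonneg (hZ0 ω)]; exact hZ1 ω)
  -- linear integral computation
  have lin : ∀ a0 a1 a2 a3 a4 : ℝ,
      ∫ ω, (a0 + a1 * T ω + a2 * T ω ^ 2 + a3 * T ω ^ 3 + a4 * Z ω) ∂P
        = a0 + a1 * p + a2 * r + a3 * s + a4 * ρ := by
    intro a0 a1 a2 a3 a4
    have i0 : Integrable (fun _ : Ω => a0) P := integrable_const _
    have i1 : Integrable (fun ω => a1 * T ω) P := iT.const_mul a1
    have i2 : Integrable (fun ω => a2 * T ω ^ 2) P := iT2.const_mul a2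
    have i3 : Integrable (fun ω => a3 * T ω ^ 3) P := iT3.const_mul a3
    have i4 : Integrable (fun ω => a4 * Z ω) P := iZ.const_mul a4
    have i01 : Integrable (fun ω => a0 + a1 * T ω) P := i0.add i1
    have i012 : Integrable (fun ω => a0 + a1 * T ω + a2 * T ω ^ 2) P := i01.add i2
    have i0123 : Integrable (fun ω => a0 + a1 * T ω + a2 * T ω ^ 2 + a3 * T ω ^ 3) P := i012.add i3
    rw [integral_add i0123 i4, integral_add i012 i3, integral_add i01 i2, integral_add i0 i1,
      integral_const_mul, integral_const_mul, integral_const_mul, integral_const_mul,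
      integral_const]
    simp [hp, hr, hs, hρdef]
    rfl
  -- basic moment bounds
  have hp0 : 0 ≤ p := by
    rw [hp]
    exact integral_nonneg_of_ae (by filter_upwards [hTae] with ω h; exact h.1.le)
  have hp1 : p ≤ 1 := by
    rw [hp]
    calc integral P T ≤ ∫ _, (1:ℝ) ∂P :=
          integral_mono_ae iT (integrable_const 1)
            (by filter_upwards [hTae] with ω h; exact h.2)
      _ = 1 := by simp
  have hρ1 : ρ ≤ 1 := by
    rw [hρdef]
    calc ∫ ω, Z ω ∂P ≤ ∫ _, (1:ℝ) ∂P := integral_mono iZ (integrable_const 1) fun ω => hZ1 ω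
      _ = 1 := by simp
  have hmeas0 : MeasurableSet {ω | X ω = 0} := hX (measurableSet_singleton 0)
  have hZind : Z = Set.indicator {ω | X ω ≠ 0} (fun _ => (1:ℝ)) := by
    funext ω; by_cases h : X ω = 0 <;> simp [hZdef, h, Set.indicator]
  have hmeasne : MeasurableSet {ω | X ω ≠ 0} := hmeas0.compl
  have hρeq : ρ = (P {ω | X ω ≠ 0}).toReal := by
    rw [hρdef, hZind, integral_indicator_const (1:ℝ) hmeasne]
    simp [measureReal_def]
  have hρ0 : 0 < ρ := by
    rw [hρeq]
    refine ENNReal.toReal_pos (fun h => hnc ⟨0, ?_⟩) (measure_ne_top P _)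
    rw [ae_iff]
    exact h
  have hγρ : ρ ≤ γ := by
    rcases hcase with h1 | h2
    · linarith
    · have hπ : 1 - γ ≤ (P {ω | X ω = 0}).toReal := by
        rcases le_or_gt (1-γ) 0 with h | h
        · exact le_trans h ENNReal.toReal_nonneg
        · have := ENNReal.toReal_mono (measure_ne_top P _) h2
          rwa [ENNReal.toReal_ofReal h.le] at this
      have hcompl : P {ω | X ω ≠ 0} = 1 - P {ω | X ω = 0} := by
        have he : {ω | X ω ≠ 0} = {ω | X ω = 0}ᶜ := rfl
        rw [he, measure_compl hmeas0 (measure_ne_top P _), measure_univ]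
      have : ρ = 1 - (P {ω | X ω = 0}).toReal := by
        rw [hρeq, hcompl, ENNReal.toReal_sub_of_le prob_le_one ENNReal.one_ne_top]
        simp
      rw [this]
      linarith
  -- fact: 1 - p ≤ ρ
  have hfmρ : 0 ≤ ρ + p - 1 := by
    have h := integral_nonneg_of_ae (μ := P)
      (f := fun ω => (-1:ℝ) + 1 * T ω + 0 * T ω ^ 2 + 0 * T ω ^ 3 + 1 * Z ω) ?_
    · rw [lin] at h; linarith
    · filter_upwards [hnn] with ω hω
      simp only [Pi.zero_apply]
      by_cases h0 : X ω = 0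
      · simp [hZdef, h0, hT1 ω h0]
      · have h1 : Z ω = 1 := by simp [hZdef, h0]
        rw [h1]
        have : 0 ≤ T ω := div_nonneg hl.le (by linarith)
        linarith
  -- fact: variance nonneg
  have hvar0 : 0 ≤ r - p ^ 2 := by
    have h := integral_nonneg_of_ae (μ := P)
      (f := fun ω => p ^ 2 + (-2 * p) * T ω + 1 * T ω ^ 2 + 0 * T ω ^ 3 + 0 * Z ω)
      (Filter.Eventually.of_forall fun ω => by
        simp only [Pi.zero_apply]; nlinarith [sq_nonneg (T ω - p)])
    rw [lin] at h; linarith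
  -- fact F1
  have hF1 : (1 - p) ^ 2 ≤ ρ * (1 - 2 * p + r) := by
    have h := integral_nonneg_of_ae (μ := P)
      (f := fun ω => (ρ^2 - 2*ρ*(1-p)) + (-2*ρ^2 + 2*ρ*(1-p)) * T ω + ρ^2 * T ω ^ 2
        + 0 * T ω ^ 3 + (1-p)^2 * Z ω) ?_
    · rw [lin] at h
      have h2 := nonneg_of_mul_left hρ0
        (show 0 ≤ ρ * (ρ * (1 - 2*p + r) - (1-p)^2) by nlinarith [h])
      linarith
    · refine Filter.Eventually.of_forall fun ω => ?_
      simp only [Pi.zero_apply]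
      have hid : (ρ^2 - 2*ρ*(1-p)) + (-2*ρ^2 + 2*ρ*(1-p)) * T ω + ρ^2 * T ω ^ 2
          + 0 * T ω ^ 3 + (1-p)^2 * Z ω = Z ω * (ρ * (1 - T ω) - (1-p))^2 := by
        by_cases h0 : X ω = 0
        · rw [hT1 ω h0]; simp [hZdef, h0]; ring
        · have : Z ω = 1 := by simp [hZdef, h0]
          rw [this]; ring
      rw [hid]
      exact mul_nonneg (hZ0 ω) (sq_nonneg _)
  -- fact cv : Cov(U,U²) ≥ 0
  have hcv : (1 - p) * (1 - 2*p + r) ≤ 1 - 3*p + 3*r - s := by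
    have h := integral_nonneg_of_ae (μ := P)
      (f := fun ω => (1 - (1-p) - (1-p)^2 + (1-p)^3) + (-3 + 2*(1-p) + (1-p)^2) * T ω
        + (3 - (1-p)) * T ω ^ 2 + (-1) * T ω ^ 3 + 0 * Z ω) ?_
    · rw [lin] at h
      have e : (1 - (1-p) - (1-p)^2 + (1-p)^3) + (-3 + 2*(1-p) + (1-p)^2) * p
          + (3 - (1-p)) * r + (-1) * s + 0 * ρ
          = (1 - 3*p + 3*r - s) - (1-p)*(1-2*p+r) := by ring
      rw [e] at h
      linarith
    · filter_upwards [hTae] with ω hω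
      simp only [Pi.zero_apply]
      have hid : (1 - (1-p) - (1-p)^2 + (1-p)^3) + (-3 + 2*(1-p) + (1-p)^2) * T ω
          + (3 - (1-p)) * T ω ^ 2 + (-1) * T ω ^ 3 + 0 * Z ω
          = ((1 - T ω) - (1-p))^2 * ((1 - T ω) + (1-p)) := by ring
      rw [hid]
      exact mul_nonneg (sq_nonneg _) (by linarith [hω.2])
  -- fact I1
  have hI1 : 0 ≤ (ρ-(1-p))*(ρ^2*(1-3*p+3*r-s) - 2*ρ*(1-p)*(1-2*p+r) + (1-p)^3)
      + (ρ*(1-2*p+r)-(1-p)^2)^2 := by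
    set α : ℝ := (ρ - (1-p)) * ρ with hα
    set β : ℝ := ρ*(1-2*p+r) - (1-p)^2 with hβ
    have hα0 : 0 ≤ α := mul_nonneg (by linarith) hρ0.le
    have hβ0 : 0 ≤ β := by rw [hβ]; linarith [hF1]
    have h := integral_nonneg_of_ae (μ := P)
      (f := fun ω => (α*(ρ^2-2*ρ*(1-p)+(1-p)^2) + β*(ρ^2-2*ρ*(1-p)))
        + (α*(-3*ρ^2+4*ρ*(1-p)-(1-p)^2) + β*(-2*ρ^2+2*ρ*(1-p))) * T ω
        + (α*(3*ρ^2-2*ρ*(1-p)) + β*ρ^2) * T ω ^ 2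
        + (-(α*ρ^2)) * T ω ^ 3 + (β*(1-p)^2) * Z ω) ?_
    · rw [lin] at h
      rw [hα, hβ] at h
      have e : ((ρ-(1-p))*ρ*(ρ^2-2*ρ*(1-p)+(1-p)^2) + (ρ*(1-2*p+r)-(1-p)^2)*(ρ^2-2*ρ*(1-p)))
          + ((ρ-(1-p))*ρ*(-3*ρ^2+4*ρ*(1-p)-(1-p)^2) + (ρ*(1-2*p+r)-(1-p)^2)*(-2*ρ^2+2*ρ*(1-p))) * p
          + ((ρ-(1-p))*ρ*(3*ρ^2-2*ρ*(1-p)) + (ρ*(1-2*p+r)-(1-p)^2)*ρ^2) * r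
          + (-((ρ-(1-p))*ρ*ρ^2)) * s + ((ρ*(1-2*p+r)-(1-p)^2)*(1-p)^2) * ρ
          = ρ * ((ρ-(1-p))*(ρ^2*(1-3*p+3*r-s) - 2*ρ*(1-p)*(1-2*p+r) + (1-p)^3)
            + (ρ*(1-2*p+r)-(1-p)^2)^2) := by ring
      rw [e] at h
      exact nonneg_of_mul_left hρ0 h
    · filter_upwards [hTae] with ω hω
      simp only [Pi.zero_apply]
      have hid : (α*(ρ^2-2*ρ*(1-p)+(1-p)^2) + β*(ρ^2-2*ρ*(1-p)))
          + (α*(-3*ρ^2+4*ρ*(1-p)-(1-p)^2) + β*(-2*ρ^2+2*ρ*(1-p))) * T ω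
          + (α*(3*ρ^2-2*ρ*(1-p)) + β*ρ^2) * T ω ^ 2
          + (-(α*ρ^2)) * T ω ^ 3 + (β*(1-p)^2) * Z ω
          = Z ω * ((ρ*(1 - T ω) - (1-p))^2 * (α*(1 - T ω) + β)) := by
        by_cases h0 : X ω = 0
        · rw [hT1 ω h0]; simp [hZdef, h0]; ring
        · have h1 : Z ω = 1 := by simp [hZdef, h0]
          rw [h1]; ring
      rw [hid]
      exact mul_nonneg (hZ0 ω) (mul_nonneg (sq_nonneg _)
        (add_nonneg (mul_nonneg hα0 (by linarith [hω.2])) hβ0))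
  -- strict variance
  have hvar : 0 < r - p ^ 2 := by
    rcases lt_or_eq_of_le hvar0 with h | h
    · exact h
    exfalso
    have isq : Integrable (fun ω => (T ω - p)^2) P := by
      apply hbd _ ((hTmeas.sub_const p).pow_const 2)
      filter_upwards [hTae] with ω hω
      rw [Real.norm_eq_abs, abs_of_nonneg (sq_nonneg _)]
      nlinarith [hω.1, hω.2, hp0, hp1]
    have hval : ∫ ω, (T ω - p)^2 ∂P = r - p^2 := by
      have hid : (fun ω => (T ω - p)^2)
          = fun ω => p^2 + (-2*p) * T ω + 1 * T ω ^ 2 + 0 * T ω ^ 3 + 0 * Z ω := by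
        funext ω; ring
      rw [hid, lin]; ring
    have hz : (fun ω => (T ω - p)^2) =ᵐ[P] 0 := by
      rw [← integral_eq_zero_iff_of_nonneg_ae
        (Filter.Eventually.of_forall fun ω => by simp only [Pi.zero_apply]; positivity) isq]
      rw [hval, ← h]
    have hTp : ∀ᵐ ω ∂P, T ω = p := by
      filter_upwards [hz] with ω hω
      have : (T ω - p)^2 = 0 := hω
      have := sq_eq_zero_iff.mp this
      linarith
    haveI : (MeasureTheory.ae P).NeBot := ae_neBot.mpr (IsProbabilityMeasure.ne_zero (μ := P))
    obtain ⟨ω₀, hω1, hω2⟩ := (hTp.and hTae).exists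
    have hppos : 0 < p := hω1 ▸ hω2.1
    apply hnc
    refine ⟨l/p - l, ?_⟩
    filter_upwards [hTp, hnn] with ω hTω hXω
    have hXl : 0 < X ω + l := by linarith
    have h' : l = p * (X ω + l) := (div_eq_iff hXl.ne').mp hTω
    have h2' : X ω + l = l / p := by
      rw [eq_div_iff hppos.ne']; linear_combination -h'
    linarith
  -- conclusion
  refine ⟨by linarith, hvar, ?_⟩
  have key := key_alg (γ := γ) (m := 1-p) (q := 1-2*p+r) (c := 1-3*p+3*r-s) (ρ := ρ)
    hρ0 hρ1 hγρ (by linarith) (by linarith) (by nlinarith [hF1]) (by nlinarith [hcv]) hI1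
  have e1 : ((1-p)-(1-2*p+r))*((1-2*p+r)-(1-p)^2) = (p-r)*(r-p^2) := by ring
  have e2 : (γ-(1-p))*((1-3*p+3*r-s)-(1-p)*(1-2*p+r)) = (p-(1-γ))*(2*r+p*r-s-2*p^2) := by ring
  rw [← e1, ← e2]
  exact key

private lemma ball_facts {l x : ℝ} (hl : 0 < l) (hx : x ∈ Metric.ball l (l/2)) :
    l/2 < x ∧ 0 < x := by
  rw [Real.ball_eq_Ioo] at hx
  constructor <;> [linarith [hx.1]; linarith [hx.1]]

private lemma deriv_aux {Ω : Type*} [MeasurableSpace Ω] (P : Measure Ω) [IsProbabilityMeasure P]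
    (X : Ω → ℝ) (hX : Measurable X) (hnn : ∀ᵐ ω ∂P, 0 ≤ X ω)
    (l : ℝ) (hl : 0 < l) :
    HasDerivAt (fun x => ∫ ω, x / (X ω + x) ∂P)
      ((∫ ω, l / (X ω + l) ∂P - ∫ ω, (l / (X ω + l))^2 ∂P)/l) l ∧
    HasDerivAt (fun x => ∫ ω, (x / (X ω + x))^2 ∂P)
      (2*(∫ ω, (l / (X ω + l))^2 ∂P - ∫ ω, (l / (X ω + l))^3 ∂P)/l) l := by
  have hε : 0 < l/2 := by linarith
  have hTb : ∀ n : ℕ, ∀ᵐ ω ∂P, ‖(l / (X ω + l))^n‖ ≤ 1 := by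
    intro n
    filter_upwards [hnn] with ω hω
    rw [Real.norm_eq_abs, abs_pow]
    apply pow_le_one₀ (abs_nonneg _)
    rw [abs_of_nonneg (div_nonneg hl.le (by linarith))]
    rw [div_le_one (by linarith)]; linarith
  have iT : Integrable (fun ω => l / (X ω + l)) P :=
    (integrable_const 1).mono' (measurable_const.div (hX.add_const l)).aestronglyMeasurable
      (by simpa using hTb 1)
  have iT2 : Integrable (fun ω => (l / (X ω + l))^2) P :=
    (integrable_const 1).mono'
      (((measurable_const.div (hX.add_const l)).pow_const 2)).aestronglyMeasurable (hTb 2)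
  have iT3 : Integrable (fun ω => (l / (X ω + l))^3) P :=
    (integrable_const 1).mono'
      (((measurable_const.div (hX.add_const l)).pow_const 3)).aestronglyMeasurable (hTb 3)
  have hDbd : ∀ᵐ ω ∂P, ∀ x ∈ Metric.ball l (l/2), X ω/(X ω + x)^2 ≤ 2/l ∧ 0 ≤ X ω/(X ω + x)^2
      ∧ 0 < X ω + x ∧ 0 ≤ x/(X ω + x) ∧ x/(X ω + x) ≤ 1 := by
    filter_upwards [hnn] with ω hω x hx
    obtain ⟨hx1, hx2⟩ := ball_facts hl hx
    have hden : 0 < X ω + x := by linarith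
    refine ⟨?_, div_nonneg hω (sq_nonneg _), hden, div_nonneg hx2.le hden.le, ?_⟩
    · have h1 : X ω/(X ω + x)^2 ≤ 1/x := by
        rw [div_le_div_iff₀ (by positivity) hx2]
        nlinarith
      have h2 : 1/x ≤ 2/l := by
        rw [div_le_div_iff₀ hx2 hl]
        linarith
      linarith
    · rw [div_le_one hden]; linarith
  have hdiff : ∀ᵐ ω ∂P, ∀ x ∈ Metric.ball l (l/2),
      HasDerivAt (fun y => y / (X ω + y)) (X ω/(X ω + x)^2) x := by
    filter_upwards [hnn] with ω hω x hx
    obtain ⟨hx1, hx2⟩ := ball_facts hl hx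
    have hne : X ω + x ≠ 0 := by positivity
    have hd := (hasDerivAt_id x).div ((hasDerivAt_id x).const_add (X ω)) hne
    simp only [id_eq] at hd
    have e : (1*(X ω + x) - x*1)/(X ω + x)^2 = X ω/(X ω + x)^2 := by ring_nf
    rw [e] at hd
    exact hd
  constructor
  · have key := hasDerivAt_integral_of_dominated_loc_of_deriv_le (μ := P)
      (F := fun x ω => x / (X ω + x)) (F' := fun x ω => X ω / (X ω + x)^2)
      (x₀ := l) (bound := fun _ => 2/l) (s := Metric.ball l (l/2)) (Metric.ball_mem_nhds l hε)
      (Filter.Eventually.of_forall fun x =>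
        (measurable_const.div (hX.add_const x)).aestronglyMeasurable)
      iT
      ((hX.div ((hX.add_const l).pow_const 2)).aestronglyMeasurable)
      (by filter_upwards [hDbd] with ω hω x hx
          have h := hω x hx
          rw [Real.norm_eq_abs, abs_of_nonneg h.2.1]
          exact h.1)
      (integrable_const _)
      hdiff
    have hval : ∫ ω, X ω / (X ω + l)^2 ∂P
        = (∫ ω, l / (X ω + l) ∂P - ∫ ω, (l / (X ω + l))^2 ∂P)/l := by
      have hcongr : (fun ω => X ω / (X ω + l)^2)
          =ᵐ[P] fun ω => (l / (X ω + l) - (l / (X ω + l))^2)/l := by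
        filter_upwards [hnn] with ω hω
        have h0 : 0 < X ω + l := by linarith
        field_simp
        ring
      rw [integral_congr_ae hcongr, integral_div, integral_sub iT iT2]
    rw [← hval]
    exact key.2
  · have key := hasDerivAt_integral_of_dominated_loc_of_deriv_le (μ := P)
      (F := fun x ω => (x / (X ω + x))^2)
      (F' := fun x ω => 2 * (x / (X ω + x)) * (X ω / (X ω + x)^2))
      (x₀ := l) (bound := fun _ => 4/l) (s := Metric.ball l (l/2)) (Metric.ball_mem_nhds l hε)
      (Filter.Eventually.of_forall fun x =>
        ((measurable_const.div (hX.add_const x)).pow_const 2).aestronglyMeasurable)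
      iT2
      ((measurable_const.mul (measurable_const.div (hX.add_const l))).mul
        (hX.div ((hX.add_const l).pow_const 2))).aestronglyMeasurable
      (by filter_upwards [hDbd] with ω hω x hx
          have h := hω x hx
          rw [Real.norm_eq_abs, abs_of_nonneg
            (mul_nonneg (mul_nonneg (by norm_num) h.2.2.2.1) h.2.1)]
          have hm := mul_le_mul h.2.2.2.2 h.1 h.2.1 zero_le_one
          rw [one_mul] at hm
          have h4 : (2:ℝ)/l + 2/l = 4/l := by ring
          nlinarith [hm])
      (integrable_const _)
      (by filter_upwards [hdiff] with ω hω x hx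
          have hd := (hω x hx).pow 2
          have e : (↑(2:ℕ) * (x / (X ω + x)) ^ (2-1) * (X ω/(X ω + x)^2))
              = 2 * (x / (X ω + x)) * (X ω / (X ω + x)^2) := by
            push_cast
            ring
          rw [e] at hd
          exact hd)
    have hval : ∫ ω, 2 * (l / (X ω + l)) * (X ω / (X ω + l)^2) ∂P
        = 2*(∫ ω, (l / (X ω + l))^2 ∂P - ∫ ω, (l / (X ω + l))^3 ∂P)/l := by
      have hcongr : (fun ω => 2 * (l / (X ω + l)) * (X ω / (X ω + l)^2))
          =ᵐ[P] fun ω => (2 * (l / (X ω + l))^2 - 2 * (l / (X ω + l))^3)/l := by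
        filter_upwards [hnn] with ω hω
        have h0 : 0 < X ω + l := by linarith
        field_simp
        ring
      rw [integral_congr_ae hcongr, integral_div,
        integral_sub (iT2.const_mul 2) (iT3.const_mul 2), integral_const_mul, integral_const_mul]
      ring
    rw [← hval]
    exact key.2

/-- Let `γ > 0` and let `X` be a nonnegative, not a.s. constant random
variable with either `γ ≥ 1` or `P(X = 0) ≥ 1 - γ`. With `β₁(λ) = E[λ/(X+λ)]` and
`β₂(λ) = E[(λ/(X+λ))²]`, the function
`λ ↦ (β₁(λ) - (1-γ))/(λ√(β₂(λ) - β₁(λ)²))` is nonincreasing on `(0,∞)`. -/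
theorem stmt_15 {Ω : Type*} [MeasurableSpace Ω] (P : Measure Ω) [IsProbabilityMeasure P]
    (γ : ℝ) (hγ : 0 < γ)
    (X : Ω → ℝ) (hX : Measurable X) (hnn : ∀ᵐ ω ∂P, 0 ≤ X ω)
    (hnc : ¬ ∃ c : ℝ, ∀ᵐ ω ∂P, X ω = c)
    (hcase : 1 ≤ γ ∨ ENNReal.ofReal (1 - γ) ≤ P {ω | X ω = 0})
    (β₁ β₂ : ℝ → ℝ)
    (h1 : ∀ lam : ℝ, β₁ lam = ∫ ω, lam / (X ω + lam) ∂P)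
    (h2 : ∀ lam : ℝ, β₂ lam = ∫ ω, (lam / (X ω + lam)) ^ 2 ∂P) :
    AntitoneOn (fun lam => (β₁ lam - (1 - γ)) /
      (lam * Real.sqrt (β₂ lam - (β₁ lam) ^ 2))) (Set.Ioi (0 : ℝ)) := by
  have hmf : ∀ l : ℝ, 0 < l →
      1 - γ ≤ β₁ l ∧ 0 < β₂ l - (β₁ l)^2 ∧
      (β₁ l - β₂ l) * (β₂ l - (β₁ l)^2)
        ≤ (β₁ l - (1-γ)) * (2*(β₂ l) + (β₁ l)*(β₂ l) - (∫ ω, (l / (X ω + l))^3 ∂P)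
            - 2*(β₁ l)^2) := by
    intro l hl
    have h := moment_facts P γ X hX hnn hnc hcase l (β₁ l) (β₂ l)
      (∫ ω, (l / (X ω + l))^3 ∂P) hl (h1 l) (h2 l) rfl
    exact h
  set F : ℝ → ℝ := fun x => (β₁ x - (1-γ))^2 / (x^2 * (β₂ x - β₁ x^2)) with hFdef
  have hder : ∀ l ∈ Set.Ioi (0:ℝ), ∃ d, HasDerivAt F d l ∧ d ≤ 0 := by
    intro l hl
    simp only [Set.mem_Ioi] at hl
    obtain ⟨hN, hV, hKEY⟩ := hmf l hl
    obtain ⟨hd1, hd2⟩ := deriv_aux P X hX hnn l hl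
    have hfun1 : (fun x => ∫ ω, x / (X ω + x) ∂P) = β₁ := (funext h1).symm
    have hfun2 : (fun x => ∫ ω, (x / (X ω + x))^2 ∂P) = β₂ := (funext h2).symm
    rw [hfun1, ← h1 l, ← h2 l] at hd1
    rw [hfun2, ← h2 l] at hd2
    set sl : ℝ := ∫ ω, (l / (X ω + l))^3 ∂P with hsl
    have hnum := (hd1.sub_const (1-γ)).pow 2
    have hden := (hasDerivAt_pow 2 l).mul (hd2.sub (hd1.pow 2))
    have hne : l^2*(β₂ l - β₁ l^2) ≠ 0 := ne_of_gt (mul_pos (pow_pos hl 2) hV)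
    have hFd := hnum.div hden hne
    have hFd' : HasDerivAt F
        ((2*l*((β₁ l - (1-γ))*((β₁ l - β₂ l)*(β₂ l - β₁ l^2)
          - (β₁ l - (1-γ))*(2*β₂ l + β₁ l*β₂ l - sl - 2*β₁ l^2))))
          / (l^2*(β₂ l - β₁ l^2))^2) l := by
      refine HasDerivAt.congr_deriv hFd ?_
      have hlne : l ≠ 0 := ne_of_gt hl
      simp only [Pi.mul_apply, Pi.sub_apply, Pi.pow_apply, Nat.cast_ofNat]
      field_simp
      ring
    refine ⟨_, hFd', ?_⟩
    apply div_nonpos_of_nonpos_of_nonneg _ (by positivity)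
    have hbr : (β₁ l - β₂ l)*(β₂ l - β₁ l^2)
        - (β₁ l - (1-γ))*(2*β₂ l + β₁ l*β₂ l - sl - 2*β₁ l^2) ≤ 0 := by linarith
    have hN0 : 0 ≤ β₁ l - (1-γ) := by linarith
    have h0 : (2*l) * ((β₁ l - (1-γ))*((β₁ l - β₂ l)*(β₂ l - β₁ l^2)
        - (β₁ l - (1-γ))*(2*β₂ l + β₁ l*β₂ l - sl - 2*β₁ l^2))) ≤ 0 :=
      mul_nonpos_iff.mpr (Or.inl ⟨(by linarith : (0:ℝ) ≤ 2*l),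
        mul_nonpos_iff.mpr (Or.inl ⟨hN0, hbr⟩)⟩)
    linarith [h0]
  have hcont : ContinuousOn F (Set.Ioi (0:ℝ)) := fun x hx =>
    ((hder x hx).choose_spec.1).continuousAt.continuousWithinAt
  have hdiffble : DifferentiableOn ℝ F (interior (Set.Ioi (0:ℝ))) := by
    rw [interior_Ioi]
    exact fun x hx => ((hder x hx).choose_spec.1).differentiableAt.differentiableWithinAt
  have hderiv : ∀ x ∈ interior (Set.Ioi (0:ℝ)), deriv F x ≤ 0 := by
    rw [interior_Ioi]
    intro x hx
    obtain ⟨d, hd, hd0⟩ := hder x hx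
    rw [hd.deriv]
    exact hd0
  have hmono := antitoneOn_of_deriv_nonpos (convex_Ioi 0) hcont hdiffble hderiv
  have hkey : ∀ x ∈ Set.Ioi (0:ℝ),
      (β₁ x - (1 - γ)) / (x * Real.sqrt (β₂ x - (β₁ x) ^ 2)) = Real.sqrt (F x) := by
    intro x hx
    simp only [Set.mem_Ioi] at hx
    obtain ⟨hN, hV, -⟩ := hmf x hx
    have hval : F x = ((β₁ x - (1-γ))/(x*Real.sqrt (β₂ x - β₁ x^2)))^2 := by
      rw [hFdef]
      rw [div_pow, mul_pow, Real.sq_sqrt hV.le]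
    rw [hval, Real.sqrt_sq (div_nonneg (by linarith)
      (mul_nonneg hx.le (Real.sqrt_nonneg _)))]
  intro a ha b hb hab
  simp only
  rw [hkey a ha, hkey b hb]
  exact Real.sqrt_le_sqrt (hmono ha hb hab)
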